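/- Let β₁, β₂ ∈ ℝ with E(β₁,β₂) ≠ 0, where E(β₁,β₂) = (1/5)[1 + β₁ + 2β₂ + 5β₁β₂ + α(β₁ + 3β₂ + 8β₁β₂)] and α = (1+√5)/2. Then there exists a natural number n₀ such that for all n ≥ n₀, the norm n(F_n) = f_n² + β₁f_{n+1}² + β₂f_{n+2}² + β₁β₂f_{n+3}² is nonzero. -/

import Mathlib

noncomputable def goldenα : ℝ := (1 + Real.sqrt 5) / 2

noncomputable def Efun (β₁ β₂ : ℝ) : ℝ :=
  (1 / 5) * (1 + β₁ + 2 * β₂ + 5 * β₁ * β₂ + goldenα * (β₁ + 3 * β₂ + 8 * β₁ * β₂))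

private lemma aux_identity (β₁ β₂ p q s x y : ℝ) (hs : s ≠ 0) :
    s ^ 2 * (((x - y) / s) ^ 2 + β₁ * ((p * x - q * y) / s) ^ 2
      + β₂ * ((p ^ 2 * x - q ^ 2 * y) / s) ^ 2 + β₁ * β₂ * ((p ^ 3 * x - q ^ 3 * y) / s) ^ 2)
    = (1 + β₁ * p ^ 2 + β₂ * p ^ 4 + β₁ * β₂ * p ^ 6) * x ^ 2
      - 2 * (x * y) * (1 + β₁ * (p * q) + β₂ * (p * q) ^ 2 + β₁ * β₂ * (p * q) ^ 3)
      + (1 + β₁ * q ^ 2 + β₂ * q ^ 4 + β₁ * β₂ * q ^ 6) * y ^ 2 := by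
  field_simp
  ring

theorem norm_fib_quaternion_eventually_ne_zero (β₁ β₂ : ℝ) (hE : Efun β₁ β₂ ≠ 0) :
    ∃ n₀ : ℕ, ∀ n ≥ n₀,
      (Nat.fib n : ℝ) ^ 2 + β₁ * (Nat.fib (n + 1) : ℝ) ^ 2
        + β₂ * (Nat.fib (n + 2) : ℝ) ^ 2 + β₁ * β₂ * (Nat.fib (n + 3) : ℝ) ^ 2 ≠ 0 := by
  have hgold : Real.goldenRatio ^ 2 = Real.goldenRatio + 1 := Real.goldenRatio_sq
  set φ : ℝ := Real.goldenRatio with hφdef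
  set ψ : ℝ := Real.goldenConj with hψdef
  set A : ℝ := 1 + β₁ * φ ^ 2 + β₂ * φ ^ 4 + β₁ * β₂ * φ ^ 6 with hA
  set B : ℝ := 1 - β₁ + β₂ - β₁ * β₂ with hB
  set C : ℝ := 1 + β₁ * ψ ^ 2 + β₂ * ψ ^ 4 + β₁ * β₂ * ψ ^ 6 with hC
  have hAE : A = 5 * Efun β₁ β₂ := by
    have hαφ : goldenα = φ := rfl
    rw [hA, Efun, hαφ]
    linear_combination (β₁ + β₂ * (φ ^ 2 + φ + 2)
      + β₁ * β₂ * (φ ^ 4 + φ ^ 3 + 2 * φ ^ 2 + 3 * φ + 5)) * hgold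
  have hA0 : A ≠ 0 := by
    rw [hAE]; intro h
    exact hE (by linarith)
  have hsq5 : Real.sqrt 5 ^ 2 = 5 := Real.sq_sqrt (by norm_num)
  have hs5 : Real.sqrt 5 ≠ 0 := by
    intro h; rw [h] at hsq5; norm_num at hsq5
  have hmul : φ * ψ = -1 := Real.goldenRatio_mul_goldenConj
  have key : ∀ n : ℕ,
      5 * ((Nat.fib n : ℝ) ^ 2 + β₁ * (Nat.fib (n + 1) : ℝ) ^ 2
        + β₂ * (Nat.fib (n + 2) : ℝ) ^ 2 + β₁ * β₂ * (Nat.fib (n + 3) : ℝ) ^ 2)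
      = A * (φ ^ n) ^ 2 - 2 * (φ ^ n * ψ ^ n) * B + C * (ψ ^ n) ^ 2 := by
    intro n
    have e0 : (Nat.fib n : ℝ) = (φ ^ n - ψ ^ n) / Real.sqrt 5 := Real.coe_fib_eq n
    have e1 : (Nat.fib (n + 1) : ℝ) = (φ * φ ^ n - ψ * ψ ^ n) / Real.sqrt 5 := by
      rw [Real.coe_fib_eq (n + 1), pow_succ, pow_succ, mul_comm (φ ^ n), mul_comm (ψ ^ n)]
    have e2 : (Nat.fib (n + 2) : ℝ) = (φ ^ 2 * φ ^ n - ψ ^ 2 * ψ ^ n) / Real.sqrt 5 := by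
      rw [Real.coe_fib_eq (n + 2), pow_add, pow_add, mul_comm (φ ^ n), mul_comm (ψ ^ n)]
    have e3 : (Nat.fib (n + 3) : ℝ) = (φ ^ 3 * φ ^ n - ψ ^ 3 * ψ ^ n) / Real.sqrt 5 := by
      rw [Real.coe_fib_eq (n + 3), pow_add, pow_add, mul_comm (φ ^ n), mul_comm (ψ ^ n)]
    have h := aux_identity β₁ β₂ φ ψ (Real.sqrt 5) (φ ^ n) (ψ ^ n) hs5
    rw [hsq5, hmul] at h
    rw [e0, e1, e2, e3, h, hA, hB, hC]
    ring
  have hψ2 : ψ ^ 2 < 1 := by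
    have h1 : ψ < 0 := Real.goldenConj_neg
    have h2 : (-1 : ℝ) < ψ := Real.neg_one_lt_goldenConj
    nlinarith
  have hψ2' : (0:ℝ) ≤ ψ ^ 2 := sq_nonneg ψ
  have hφ1 : 1 < φ ^ 2 := by
    have := Real.one_lt_goldenRatio
    nlinarith
  obtain ⟨n₀, hn₀⟩ := pow_unbounded_of_one_lt ((2 * |B| + |C| + 1) / |A|) hφ1
  refine ⟨n₀, fun n hn h0 => ?_⟩
  have hk := key n
  rw [h0, mul_zero] at hk
  have habsψ : (ψ ^ n) ^ 2 ≤ 1 := by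
    rw [← pow_mul, mul_comm, pow_mul]
    exact pow_le_one₀ hψ2' hψ2.le
  have hmono : (φ ^ 2) ^ n₀ ≤ (φ ^ n) ^ 2 := by
    calc (φ ^ 2) ^ n₀ ≤ (φ ^ 2) ^ n := pow_le_pow_right₀ hφ1.le hn
      _ = (φ ^ n) ^ 2 := by rw [← pow_mul, mul_comm, pow_mul]
  have hAbig : 2 * |B| + |C| + 1 < |A| * (φ ^ n) ^ 2 := by
    have hApos : 0 < |A| := abs_pos.mpr hA0
    rw [div_lt_iff₀ hApos] at hn₀
    calc 2 * |B| + |C| + 1 < (φ ^ 2) ^ n₀ * |A| := hn₀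
      _ ≤ (φ ^ n) ^ 2 * |A| := mul_le_mul_of_nonneg_right hmono hApos.le
      _ = |A| * (φ ^ n) ^ 2 := mul_comm _ _
  have habsφψ : |φ ^ n * ψ ^ n| = 1 := by
    rw [← mul_pow, hmul, abs_pow, abs_neg, abs_one, one_pow]
  have hub : |A * (φ ^ n) ^ 2| ≤ |2 * (φ ^ n * ψ ^ n) * B| + |C * (ψ ^ n) ^ 2| := by
    have heq : A * (φ ^ n) ^ 2 = 2 * (φ ^ n * ψ ^ n) * B - C * (ψ ^ n) ^ 2 := by linarith
    rw [heq]
    exact abs_sub _ _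
  have h1 : |2 * (φ ^ n * ψ ^ n) * B| = 2 * |B| := by
    rw [abs_mul, abs_mul, habsφψ]; norm_num
  have h2 : |C * (ψ ^ n) ^ 2| ≤ |C| := by
    rw [abs_mul, abs_of_nonneg (sq_nonneg (ψ ^ n))]
    nlinarith [abs_nonneg C]
  have h3 : |A * (φ ^ n) ^ 2| = |A| * (φ ^ n) ^ 2 := by
    rw [abs_mul, abs_of_nonneg (sq_nonneg (φ ^ n))]
  linarith
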